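/- For odd k with 3 ≤ k ≤ n, from any n unit vectors in ℝ² one can select k of them with signs ε_1, ..., ε_k ∈ {±1} such that the signed sum has Euclidean norm at least √(1 + (k−1)(k+1)·cos²((k−1)π/(2n))). -/

import Mathlib

open Finset

section helpers
open Complex

lemma normsq_eq (z : ℂ) : ‖z‖^2 = z.re^2 + z.im^2 := by
  rw [Complex.sq_norm, Complex.normSq_apply]; ring

lemma one_step (z v : ℂ) (c s : ℝ) (hc : 0 ≤ c) (hs : 0 ≤ s) (hcs : c^2 + s^2 = 1)
    (hz : 0 ≤ z.re) (hv : ‖v‖ = 1) (hvc : c ≤ v.re) :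
    ∃ σ : ℝ, (σ = 1 ∨ σ = -1) ∧ ‖z + (⟨c, σ * s⟩ : ℂ)‖^2 ≤ ‖z + v‖^2 := by
  have hv2 : v.re^2 + v.im^2 = 1 := by
    have := normsq_eq v; rw [hv] at this; linarith [this]
  have him : v.im^2 ≤ s^2 := by nlinarith
  have h1 : -s ≤ v.im := by nlinarith
  have h2 : v.im ≤ s := by nlinarith
  refine ⟨if z.im ≤ 0 then 1 else -1, by split <;> simp, ?_⟩
  rw [normsq_eq, normsq_eq]
  simp only [Complex.add_re, Complex.add_im]
  split
  · next h => nlinarith [mul_le_mul_of_nonneg_left hvc hz]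
  · next h =>
    push_neg at h
    nlinarith [mul_le_mul_of_nonneg_left hvc hz]

lemma replace_all (c s : ℝ) (hc : 0 ≤ c) (hs : 0 ≤ s) (hcs : c^2 + s^2 = 1) (m : ℕ) :
    ∀ (z : ℂ), 0 ≤ z.re → ∀ (v : Fin m → ℂ), (∀ j, ‖v j‖ = 1) → (∀ j, c ≤ (v j).re) →
    ∃ t : ℤ, Even (t - m) ∧
      (z.re + m * c)^2 + (z.im + t * s)^2 ≤ ‖z + ∑ j, v j‖^2 := by
  induction m with
  | zero =>
    intro z hz v _ _
    refine ⟨0, by simp, ?_⟩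
    rw [normsq_eq]; simp
  | succ m ih =>
    intro z hz v hv1 hvc
    have hzre : 0 ≤ (z + ∑ j : Fin m, v j.castSucc).re := by
      rw [Complex.add_re, Complex.re_sum]
      have : (0:ℝ) ≤ ∑ j : Fin m, (v j.castSucc).re :=
        Finset.sum_nonneg fun j _ => le_trans hc (hvc _)
      linarith
    obtain ⟨σ, hσ, hstep⟩ := one_step (z + ∑ j : Fin m, v j.castSucc) (v (Fin.last m))
      c s hc hs hcs hzre (hv1 _) (hvc _)
    have hz2 : 0 ≤ (z + (⟨c, σ * s⟩ : ℂ)).re := by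
      simp only [Complex.add_re]; change 0 ≤ z.re + c; linarith
    obtain ⟨t, ht, hle⟩ := ih (z + (⟨c, σ * s⟩ : ℂ)) hz2
      (fun j => v j.castSucc) (fun j => hv1 _) (fun j => hvc _)
    have hσZ : ∃ σ' : ℤ, (σ':ℝ) = σ ∧ Even (σ' - 1) := by
      rcases hσ with h | h
      · exact ⟨1, by simp [h], by simp⟩
      · exact ⟨-1, by simp [h], ⟨-1, by ring⟩⟩
    obtain ⟨σ', hσ'1, hσ'2⟩ := hσZ
    refine ⟨t + σ', ?_, ?_⟩
    · have : t + σ' - (m+1 : ℕ) = (t - m) + (σ' - 1) := by push_cast; ring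
      rw [this]
      exact Even.add ht hσ'2
    · have e1 : z + (⟨c, σ * s⟩ : ℂ) + ∑ j : Fin m, v j.castSucc
          = z + ∑ j : Fin m, v j.castSucc + (⟨c, σ * s⟩ : ℂ) := by ring
      have e2 : z + ∑ j : Fin m, v j.castSucc + v (Fin.last m) = z + ∑ j, v j := by
        rw [Fin.sum_univ_castSucc]; ring
      rw [e2] at hstep
      rw [e1] at hle
      have hre : (z + (⟨c, σ * s⟩ : ℂ)).re = z.re + c := rfl
      have him : (z + (⟨c, σ * s⟩ : ℂ)).im = z.im + σ * s := rfl
      rw [hre, him] at hle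
      have : (z.re + ↑(m + 1) * c) ^ 2 + (z.im + ↑(t + σ') * s) ^ 2
          = (z.re + c + ↑m * c) ^ 2 + (z.im + σ * s + ↑t * s) ^ 2 := by
        rw [← hσ'1]; push_cast; ring
      rw [this]
      exact le_trans hle hstep

lemma odd_arc (k : ℕ) (hk : Odd k) (c s : ℝ) (hc : 0 ≤ c) (hs : 0 ≤ s) (hcs : c^2 + s^2 = 1)
    (v : Fin k → ℂ) (hv1 : ∀ j, ‖v j‖ = 1) (hvc : ∀ j, c ≤ (v j).re) :
    Real.sqrt (1 + ((k:ℝ)^2 - 1) * c^2) ≤ ‖∑ j, v j‖ := by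
  obtain ⟨t, ht, hle⟩ := replace_all c s hc hs hcs k 0 (by simp) v hv1 hvc
  simp only [Complex.zero_re, Complex.zero_im, zero_add] at hle
  have ht0 : t ≠ 0 := by
    rintro rfl
    rw [zero_sub] at ht
    have : Even (k : ℤ) := by simpa using ht.neg
    have : Even k := by exact_mod_cast this
    exact (Nat.not_even_iff_odd.mpr hk) this
  have ht1 : (1:ℝ) ≤ (t:ℝ)^2 := by
    have : (1:ℤ) ≤ |t| := Int.one_le_abs ht0
    have h2 : (1:ℤ) ≤ t^2 := by nlinarith [_root_.sq_abs t]
    exact_mod_cast h2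
  have key : 1 + ((k:ℝ)^2 - 1) * c^2 ≤ ‖∑ j, v j‖^2 := by nlinarith
  calc Real.sqrt (1 + ((k:ℝ)^2 - 1) * c^2) ≤ Real.sqrt (‖∑ j, v j‖^2) :=
        Real.sqrt_le_sqrt key
    _ = ‖∑ j, v j‖ := Real.sqrt_sq (norm_nonneg _)


lemma decomp (u : ℂ) (hu : ‖u‖ = 1) :
    ∃ (x η : ℝ), 0 ≤ x ∧ x < Real.pi ∧ (η = 1 ∨ η = -1) ∧
      u = (η : ℂ) * Complex.exp (x * Complex.I) := by
  have habs : ‖u‖ = 1 := hu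
  have hexp : u = Complex.exp (u.arg * Complex.I) := by
    conv_lhs => rw [← Complex.norm_mul_exp_arg_mul_I u]
    rw [habs]; simp
  have h1 := Complex.arg_le_pi u
  have h2 := Complex.neg_pi_lt_arg u
  rcases lt_or_ge u.arg 0 with h | h
  · refine ⟨u.arg + Real.pi, -1, by linarith, by linarith, Or.inr rfl, ?_⟩
    have : ((-1 : ℝ) : ℂ) * Complex.exp ((u.arg + Real.pi : ℝ) * Complex.I)
        = Complex.exp (u.arg * Complex.I) := by
      push_cast
      rw [add_mul, Complex.exp_add, Complex.exp_pi_mul_I]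
      ring
    rw [this]; exact hexp
  · rcases lt_or_ge u.arg Real.pi with h3 | h3
    · refine ⟨u.arg, 1, h, h3, Or.inl rfl, ?_⟩
      have : ((1 : ℝ) : ℂ) * Complex.exp (u.arg * Complex.I)
          = Complex.exp (u.arg * Complex.I) := by simp
      rw [this]; exact hexp
    · have h4 : u.arg = Real.pi := le_antisymm h1 h3
      refine ⟨0, -1, le_refl _, Real.pi_pos, Or.inr rfl, ?_⟩
      have : ((-1 : ℝ) : ℂ) * Complex.exp ((0 : ℝ) * Complex.I)
          = Complex.exp (u.arg * Complex.I) := by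
        rw [h4]
        push_cast
        rw [Complex.exp_pi_mul_I]
        simp
      rw [this]; exact hexp


lemma tele (f : ℕ → ℝ) (a b : ℕ) :
    ∑ j ∈ Finset.range a, (f (j + b) - f j) = ∑ j ∈ Finset.range b, (f (j + a) - f j) := by
  have key : ∀ x y : ℕ, ∑ j ∈ Finset.range x, f (j + y)
      = ∑ j ∈ Finset.Ico 0 (y + x), f j - ∑ j ∈ Finset.Ico 0 y, f j := by
    intro x y
    have h1 := Finset.sum_Ico_consecutive f (Nat.zero_le y) (Nat.le_add_right y x)
    have h2 : ∑ j ∈ Finset.Ico y (y + x), f j = ∑ j ∈ Finset.range x, f (j + y) := by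
      rw [Finset.sum_Ico_eq_sum_range]
      simp [add_comm]
    rw [← h2]; linarith
  rw [Finset.sum_sub_distrib, Finset.sum_sub_distrib, key a b, key b a, add_comm b a]
  simp only [Finset.range_eq_Ico]
  ring

end helpers

section main
open Complex in
theorem stmt_18 (n k : ℕ) (hk : Odd k) (hk2 : 3 ≤ k) (hkn : k ≤ n)
    (u : Fin n → ℂ) (hu : ∀ i, ‖u i‖ = 1) :
    ∃ (s : Fin k → Fin n) (ε : Fin k → ℝ),
      Function.Injective s ∧ (∀ i, ε i = 1 ∨ ε i = -1) ∧
      ‖∑ i, ε i • u (s i)‖ ≥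
        Real.sqrt (1 + ((k : ℝ) - 1) * ((k : ℝ) + 1) *
          Real.cos (((k : ℝ) - 1) * Real.pi / (2 * n)) ^ 2) := by
  have hn0 : 0 < n := by omega
  have hπ := Real.pi_pos
  set θ : ℝ := ((k : ℝ) - 1) * Real.pi / (2 * n) with hθdef
  set c : ℝ := Real.cos θ with hcdef
  set s : ℝ := Real.sin θ with hsdef
  choose x η hx0 hxπ hη hueq using fun i => decomp (u i) (hu i)
  set τ := Tuple.sort x with hτdef
  have hmono : Monotone (x ∘ τ) := Tuple.monotone_sort x
  set xs : ℕ → ℝ := fun p => x (τ ⟨p % n, Nat.mod_lt p hn0⟩) with hxsdef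
  have hxs_eq : ∀ p q : ℕ, p % n = q % n → xs p = xs q := by
    intro p q h
    have hfe : (⟨p % n, Nat.mod_lt p hn0⟩ : Fin n) = ⟨q % n, Nat.mod_lt q hn0⟩ := by
      simp only [Fin.mk.injEq]; exact h
    simp only [hxsdef, hfe]
  have hxs0 : ∀ p, 0 ≤ xs p := fun p => hx0 _
  have hxsπ : ∀ p, xs p < Real.pi := fun p => hxπ _
  have hxsmono : ∀ a b : ℕ, a ≤ b → b < n → xs a ≤ xs b := by
    intro a b hab hb
    have hle : (⟨a % n, Nat.mod_lt a hn0⟩ : Fin n) ≤ ⟨b % n, Nat.mod_lt b hn0⟩ := by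
      apply Fin.mk_le_mk.mpr
      rw [Nat.mod_eq_of_lt (lt_of_le_of_lt hab hb), Nat.mod_eq_of_lt hb]
      exact hab
    exact hmono hle
  set X : ℕ → ℝ := fun p => xs p + (if p < n then 0 else Real.pi) with hXdef
  have hXmono : ∀ a b : ℕ, a ≤ b → b < 2*n → X a ≤ X b := by
    intro a b hab hb2
    by_cases ha : a < n <;> by_cases hb : b < n
    · simp only [hXdef, if_pos ha, if_pos hb]
      linarith [hxsmono a b hab hb]
    · simp only [hXdef, if_pos ha, if_neg hb]
      linarith [hxsπ a, hxs0 b]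
    · omega
    · simp only [hXdef, if_neg ha, if_neg hb]
      have h1 : xs a = xs (a - n) := hxs_eq a (a-n) (by
        conv_lhs => rw [Nat.mod_eq_sub_mod (by omega)])
      have h2 : xs b = xs (b - n) := hxs_eq b (b-n) (by
        conv_lhs => rw [Nat.mod_eq_sub_mod (by omega)])
      rw [h1, h2]
      linarith [hxsmono (a-n) (b-n) (by omega) (by omega)]
  have hXshift : ∀ p : ℕ, p < n → X (p + n) = X p + Real.pi := by
    intro p hp
    have h1 : xs (p + n) = xs p := hxs_eq _ _ (Nat.add_mod_right p n)
    simp only [hXdef, h1, if_pos hp, if_neg (by omega : ¬ p + n < n)]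
    ring
  have hkc : ((k - 1 : ℕ) : ℝ) = (k : ℝ) - 1 := by
    have h1 : (1:ℕ) ≤ k := by omega
    push_cast [Nat.cast_sub h1]
    ring
  -- pigeonhole
  obtain ⟨j₀, hj₀, hspan⟩ :
      ∃ j₀, j₀ < n ∧ X (j₀ + (k-1)) - X j₀ ≤ ((k:ℝ) - 1) * Real.pi / n := by
    by_contra hcon
    push_neg at hcon
    have h1 : ∑ j ∈ Finset.range n, (((k:ℝ)-1) * Real.pi / n)
        < ∑ j ∈ Finset.range n, (X (j + (k-1)) - X j) :=
      Finset.sum_lt_sum_of_nonempty (Finset.nonempty_range_iff.mpr (by omega))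
        (fun j hj => hcon j (Finset.mem_range.mp hj))
    have h2 : ∑ j ∈ Finset.range n, (X (j + (k-1)) - X j) = ((k:ℝ)-1) * Real.pi := by
      rw [tele]
      have hterm : ∀ j ∈ Finset.range (k-1), X (j + n) - X j = Real.pi := by
        intro j hj
        have hjn : j < n := by have := Finset.mem_range.mp hj; omega
        rw [hXshift j hjn]; ring
      rw [Finset.sum_congr rfl hterm, Finset.sum_const, Finset.card_range, nsmul_eq_mul, hkc]
    have h3 : ∑ j ∈ Finset.range n, (((k:ℝ)-1) * Real.pi / n) = ((k:ℝ)-1) * Real.pi := by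
      rw [Finset.sum_const, Finset.card_range, nsmul_eq_mul]
      field_simp
    linarith
  -- the window
  have h2θ : ((k:ℝ) - 1) * Real.pi / n = 2 * θ := by
    rw [hθdef]; field_simp
  rw [h2θ] at hspan
  have hk3 : (3:ℝ) ≤ (k:ℝ) := by exact_mod_cast hk2
  have hknR : (k:ℝ) ≤ (n:ℝ) := by exact_mod_cast hkn
  have hnR : (0:ℝ) < n := by exact_mod_cast hn0
  have hθ0 : 0 ≤ θ := by
    rw [hθdef]
    apply div_nonneg (mul_nonneg (by linarith) hπ.le) (by linarith)
  have hθπ2 : θ ≤ Real.pi / 2 := by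
    rw [hθdef, div_le_iff₀ (by linarith : (0:ℝ) < 2 * n)]
    nlinarith
  have hc0 : 0 ≤ c := Real.cos_nonneg_of_mem_Icc ⟨by linarith, hθπ2⟩
  have hs0 : 0 ≤ s := Real.sin_nonneg_of_nonneg_of_le_pi hθ0 (by linarith)
  have hcs : c^2 + s^2 = 1 := Real.cos_sq_add_sin_sq θ
  -- index map
  set sfun : Fin k → Fin n := fun l => τ ⟨(j₀ + (l:ℕ)) % n, Nat.mod_lt _ hn0⟩ with hsfundef
  have hinj : Function.Injective sfun := by
    intro a b hab
    have h1 : (j₀ + (a:ℕ)) % n = (j₀ + (b:ℕ)) % n := by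
      have := τ.injective hab
      simpa [Fin.mk.injEq] using this
    have h2 : (j₀ + (a:ℕ)) ≡ (j₀ + (b:ℕ)) [MOD n] := h1
    have h3 := h2.dvd
    have h4 : ((j₀ + (b:ℕ) : ℕ) : ℤ) - ((j₀ + (a:ℕ) : ℕ) : ℤ) = ((b:ℕ):ℤ) - ((a:ℕ):ℤ) := by
      push_cast; ring
    rw [h4] at h3
    have h5 : ((b:ℕ):ℤ) - ((a:ℕ):ℤ) = 0 := by
      apply Int.eq_zero_of_abs_lt_dvd h3
      have ha := a.isLt
      have hb := b.isLt
      rw [abs_lt]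
      constructor <;> [skip; skip] <;> omega
    apply Fin.ext
    omega
  set ε : Fin k → ℝ := fun l => η (sfun l) * (if j₀ + (l:ℕ) < n then 1 else -1) with hεdef
  have hε : ∀ l, ε l = 1 ∨ ε l = -1 := by
    intro l
    rcases hη (sfun l) with h | h <;>
      simp only [hεdef, h] <;> split <;> norm_num
  -- key identity
  have key : ∀ l : Fin k,
      ε l • u (sfun l) = Complex.exp ((X (j₀ + (l:ℕ)) : ℝ) * Complex.I) := by
    intro l
    have hx' : xs (j₀ + (l:ℕ)) = x (sfun l) := rfl
    have hXv : X (j₀ + (l:ℕ)) = x (sfun l) + (if j₀ + (l:ℕ) < n then (0:ℝ) else Real.pi) := by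
      simp only [hXdef, hx']
    rw [hXv, hueq (sfun l), Complex.real_smul]
    simp only [hεdef]
    by_cases hlt : j₀ + (l:ℕ) < n
    · rw [if_pos hlt, if_pos hlt]
      have hcast : ((x (sfun l) + 0 : ℝ) : ℂ) * Complex.I
          = ((x (sfun l) : ℝ) : ℂ) * Complex.I := by push_cast; ring
      rw [hcast]
      rcases hη (sfun l) with h | h <;> rw [h] <;> push_cast <;> ring
    · rw [if_neg hlt, if_neg hlt]
      have hcast : ((x (sfun l) + Real.pi : ℝ) : ℂ) * Complex.I
          = ((x (sfun l) : ℝ) : ℂ) * Complex.I + (Real.pi : ℂ) * Complex.I := by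
        push_cast; ring
      rw [hcast, Complex.exp_add, Complex.exp_pi_mul_I]
      rcases hη (sfun l) with h | h <;> rw [h] <;> push_cast <;> ring
  -- rotated vectors
  set mθ : ℝ := X j₀ + θ with hmdef
  set v : Fin k → ℂ := fun l => Complex.exp (((X (j₀ + (l:ℕ)) - mθ : ℝ)) * Complex.I) with hvdef
  have hv1 : ∀ l, ‖v l‖ = 1 := by
    intro l
    simp only [hvdef]
    rw [Complex.norm_exp_ofReal_mul_I]
  have hbound : ∀ l : Fin k, X j₀ ≤ X (j₀ + (l:ℕ)) ∧ X (j₀ + (l:ℕ)) ≤ X j₀ + 2*θ := by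
    intro l
    have hl := l.isLt
    constructor
    · exact hXmono j₀ (j₀ + (l:ℕ)) (by omega) (by omega)
    · have h1 : X (j₀ + (l:ℕ)) ≤ X (j₀ + (k-1)) :=
        hXmono (j₀ + (l:ℕ)) (j₀ + (k-1)) (by omega) (by omega)
      linarith
  have hvc : ∀ l, c ≤ (v l).re := by
    intro l
    have hre : (v l).re = Real.cos (X (j₀ + (l:ℕ)) - mθ) := by
      simp only [hvdef]
      exact Complex.exp_ofReal_mul_I_re _
    rw [hre]
    obtain ⟨hb1, hb2⟩ := hbound l
    have habs : |X (j₀ + (l:ℕ)) - mθ| ≤ θ := by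
      rw [abs_le, hmdef]
      constructor <;> linarith
    calc c ≤ Real.cos |X (j₀ + (l:ℕ)) - mθ| :=
          Real.cos_le_cos_of_nonneg_of_le_pi (abs_nonneg _) (by linarith) habs
      _ = Real.cos (X (j₀ + (l:ℕ)) - mθ) := Real.cos_abs _
  have hsum_eq : ∑ l, v l
      = Complex.exp (((-mθ : ℝ) : ℂ) * Complex.I) * ∑ l, ε l • u (sfun l) := by
    rw [Finset.mul_sum]
    apply Finset.sum_congr rfl
    intro l _
    simp only [hvdef]
    rw [key l, ← Complex.exp_add]
    exact congrArg Complex.exp (by push_cast; ring)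
  have hnorm_eq : ‖∑ l, ε l • u (sfun l)‖ = ‖∑ l, v l‖ := by
    have h1 : ‖Complex.exp (((-mθ : ℝ) : ℂ) * Complex.I)‖ = 1 := by
      rw [Complex.norm_exp_ofReal_mul_I]
    rw [hsum_eq, norm_mul, h1, one_mul]
  refine ⟨sfun, ε, hinj, hε, ?_⟩
  rw [ge_iff_le]
  have harc := odd_arc k hk c s hc0 hs0 hcs v hv1 hvc
  have hring : 1 + ((k:ℝ) - 1) * ((k:ℝ) + 1) * c^2 = 1 + ((k:ℝ)^2 - 1) * c^2 := by ring
  rw [hring, hnorm_eq]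
  exact harc

end main
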